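/- Fix 0 < q < 1 and n ≥ 1. Let G = (G_1, ..., G_n) be i.i.d. geometric random variables with P(G_i = k) = q^k(1-q). Define Γ_n(G) to be the permutation of [n] obtained by ordering the indices i ∈ [n] by the total order: i precedes j iff G_i > G_j, or G_i = G_j and i < j; the permutation π lists the indices in this order. Then for every permutation π ∈ S_n, P(Γ_n(G) = π) = q^{maj(π)} / [n]_q!, where maj(π) is the sum of the descent positions of π and [n]_q! = ∏_{i=1}^n (1 + q + ... + q^{i-1}). -/

import Mathlib

open MeasureTheory ProbabilityTheory

/-- The major index of a word `w` of length `N`: the sum of the (1-indexed) positions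
`i` with `w i > w (i+1)`. -/
def wmaj {N : ℕ} {α : Type*} [LinearOrder α] (w : Fin N → α) : ℕ :=
  ∑ i ∈ Finset.range (N - 1),
    if h : i + 1 < N then
      (if w ⟨i + 1, h⟩ < w ⟨i, Nat.lt_of_succ_lt h⟩ then i + 1 else 0)
    else 0

/-- The major index of a permutation. -/
def maj {n : ℕ} (π : Equiv.Perm (Fin n)) : ℕ := wmaj (fun i => π i)

/-- The `q`-integer `[m]_q = 1 + q + ⋯ + q^{m-1}`. -/
def qint (q : ℝ) (m : ℕ) : ℝ := ∑ j ∈ Finset.range m, q ^ j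

/-- The `q`-factorial `[n]_q! = ∏_{i=1}^n [i]_q`. -/
def qfact (q : ℝ) (n : ℕ) : ℝ := ∏ i ∈ Finset.range n, qint q (i + 1)

/-- `GammaEq G π` says the Maj sampler applied to `G` produces `π`: reading off the
indices of `[n]` sorted by the order `i ≺ j ↔ G i > G j ∨ (G i = G j ∧ i < j)` in
ascending order yields `π(1), …, π(n)`.  Equivalently, each adjacent pair in the list
`π(1), …, π(n)` is correctly ordered. -/
def GammaEq {n : ℕ} (G : Fin n → ℕ) (π : Equiv.Perm (Fin n)) : Prop :=
  ∀ i : ℕ, ∀ h : i + 1 < n,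
    G (π ⟨i + 1, h⟩) < G (π ⟨i, Nat.lt_of_succ_lt h⟩) ∨
      (G (π ⟨i + 1, h⟩) = G (π ⟨i, Nat.lt_of_succ_lt h⟩) ∧
        (π ⟨i, Nat.lt_of_succ_lt h⟩ : ℕ) < (π ⟨i + 1, h⟩ : ℕ))

namespace MajAux

variable {n : ℕ}

/-- descent indicator at step `j` (between positions `j` and `j+1`). -/
def dd (π : Equiv.Perm (Fin n)) (j : ℕ) : ℕ :=
  if h : j + 1 < n then
    (if π ⟨j + 1, h⟩ < π ⟨j, Nat.lt_of_succ_lt h⟩ then 1 else 0) else 0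

def cc (c : Fin n → ℕ) (j : ℕ) : ℕ := if h : j < n then c ⟨j, h⟩ else 0

def B (π : Equiv.Perm (Fin n)) (c : Fin n → ℕ) (i : ℕ) : ℕ :=
  ∑ j ∈ Finset.Ico i n, (cc c j + dd π j)

def bb (π : Equiv.Perm (Fin n)) (g : Fin n → ℕ) (i : ℕ) : ℕ :=
  if h : i < n then g (π ⟨i, h⟩) else 0

def Th (π : Equiv.Perm (Fin n)) (g : Fin n → ℕ) : Fin n → ℕ :=
  fun i => bb π g i - bb π g (i + 1) - dd π i

def Ph (π : Equiv.Perm (Fin n)) (c : Fin n → ℕ) : Fin n → ℕ :=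
  fun i => B π c (π.symm i)

lemma B_split (π : Equiv.Perm (Fin n)) (c : Fin n → ℕ) {i : ℕ} (hi : i < n) :
    B π c i = cc c i + dd π i + B π c (i + 1) := by
  rw [B, show Finset.Ico i n = insert i (Finset.Ico (i+1) n) from
    (Finset.insert_Ico_add_one_left_eq_Ico hi).symm, Finset.sum_insert (by simp), B]

lemma bb_Ph (π : Equiv.Perm (Fin n)) (c : Fin n → ℕ) {i : ℕ} (hi : i ≤ n) :
    bb π (Ph π c) i = B π c i := by
  rcases lt_or_eq_of_le hi with h | h
  · simp only [bb, dif_pos h, Ph, Equiv.symm_apply_apply]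
  · subst h
    simp [bb, B]

lemma Th_Ph (π : Equiv.Perm (Fin n)) (c : Fin n → ℕ) : Th π (Ph π c) = c := by
  funext i
  have hi : (i : ℕ) < n := i.2
  have h1 : bb π (Ph π c) i = B π c i := bb_Ph π c (le_of_lt hi)
  have h2 : bb π (Ph π c) (i + 1) = B π c (i + 1) := bb_Ph π c hi
  have h3 := B_split π c hi
  have : cc c i = c i := by simp [cc, hi]
  simp only [Th, h1, h2, h3]
  omega

lemma gammaEq_Ph (π : Equiv.Perm (Fin n)) (c : Fin n → ℕ) : GammaEq (Ph π c) π := by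
  intro i h
  have h1 : Ph π c (π ⟨i+1, h⟩) = B π c (i+1) := by
    simp [Ph, Equiv.symm_apply_apply]
  have h2 : Ph π c (π ⟨i, Nat.lt_of_succ_lt h⟩) = B π c i := by
    simp [Ph, Equiv.symm_apply_apply]
  rw [h1, h2, B_split π c (Nat.lt_of_succ_lt h)]
  have hne : π ⟨i, Nat.lt_of_succ_lt h⟩ ≠ π ⟨i+1, h⟩ := by
    intro he
    have := π.injective he
    simp at this
  by_cases hd : π ⟨i+1, h⟩ < π ⟨i, Nat.lt_of_succ_lt h⟩
  · left
    have : dd π i = 1 := by simp [dd, h, hd]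
    omega
  · have hlt : π ⟨i, Nat.lt_of_succ_lt h⟩ < π ⟨i+1, h⟩ := lt_of_le_of_ne (not_lt.1 hd) hne
    have hdd : dd π i = 0 := by simp [dd, h, hd]
    rcases Nat.eq_zero_or_pos (cc c i) with hc | hc
    · exact Or.inr ⟨by omega, by exact_mod_cast hlt⟩
    · left; omega

lemma bb_ineq (π : Equiv.Perm (Fin n)) {g : Fin n → ℕ} (hg : GammaEq g π) (i : ℕ) :
    bb π g (i + 1) + dd π i ≤ bb π g i := by
  by_cases h : i + 1 < n
  · have hi : i < n := Nat.lt_of_succ_lt h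
    have := hg i h
    simp only [bb, dif_pos h, dif_pos hi]
    by_cases hd : π ⟨i+1, h⟩ < π ⟨i, hi⟩
    · have hdd : dd π i = 1 := by simp [dd, h, hd]
      rcases this with h' | ⟨he, hlt⟩
      · omega
      · exfalso
        exact absurd (show (π ⟨i, hi⟩ : ℕ) ≤ π ⟨i+1,h⟩ from le_of_lt hlt)
          (not_le.2 (by exact_mod_cast hd))
    · have hdd : dd π i = 0 := by simp [dd, h, hd]
      rcases this with h' | ⟨he, hlt⟩ <;> omega
  · have hdd : dd π i = 0 := by simp [dd, h]
    have : bb π g (i+1) = 0 := by simp [bb]; omega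
    omega

lemma B_Th (π : Equiv.Perm (Fin n)) {g : Fin n → ℕ} (hg : GammaEq g π) :
    ∀ k i, i + k = n → B π (Th π g) i = bb π g i := by
  intro k
  induction k with
  | zero =>
    intro i hi
    subst hi
    simp [B, bb]
  | succ k ih =>
    intro i hi
    have hin : i < n := by omega
    rw [B_split π _ hin, ih (i+1) (by omega)]
    have h1 : cc (Th π g) i = bb π g i - bb π g (i+1) - dd π i := by
      simp [cc, hin, Th]
    have h2 := bb_ineq π hg i
    omega

lemma Ph_Th (π : Equiv.Perm (Fin n)) {g : Fin n → ℕ} (hg : GammaEq g π) :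
    Ph π (Th π g) = g := by
  funext i
  have h : ((π.symm i : Fin n) : ℕ) < n := (π.symm i).2
  rw [Ph, B_Th π hg (n - π.symm i) _ (by omega)]
  simp [bb, h]

/-- the equivalence between `Fin n → ℕ` and valid inputs. -/
def equivS (π : Equiv.Perm (Fin n)) : (Fin n → ℕ) ≃ {g : Fin n → ℕ // GammaEq g π} where
  toFun c := ⟨Ph π c, gammaEq_Ph π c⟩
  invFun g := Th π g.1
  left_inv c := Th_Ph π c
  right_inv g := Subtype.ext (Ph_Th π g.2)

lemma sum_Ico_weighted (h : ℕ → ℕ) :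
    ∑ i ∈ Finset.range n, ∑ j ∈ Finset.Ico i n, h j
      = ∑ j ∈ Finset.range n, (j + 1) * h j := by
  have key : ∀ i ∈ Finset.range n, ∑ j ∈ Finset.Ico i n, h j
      = ∑ j ∈ Finset.range n, if i ≤ j then h j else 0 := by
    intro i _
    rw [Finset.sum_ite, Finset.sum_const_zero, add_zero]
    congr 1
    ext j
    simp only [Finset.mem_Ico, Finset.mem_filter, Finset.mem_range]
    omega
  rw [Finset.sum_congr rfl key, Finset.sum_comm]
  refine Finset.sum_congr rfl fun j hj => ?_
  rw [Finset.sum_ite, Finset.sum_const_zero, add_zero, Finset.sum_const]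
  have : Finset.filter (fun i => i ≤ j) (Finset.range n) = Finset.range (j + 1) := by
    ext i
    simp only [Finset.mem_filter, Finset.mem_range]
    simp only [Finset.mem_range] at hj
    omega
  rw [this, Finset.card_range, smul_eq_mul]


lemma maj_eq (π : Equiv.Perm (Fin n)) :
    maj π = ∑ j ∈ Finset.range n, (j + 1) * dd π j := by
  rw [maj, wmaj,
    ← Finset.sum_subset (Finset.range_subset_range.2 (Nat.sub_le n 1))
      (f := fun j => (j + 1) * dd π j) ?_]
  · refine Finset.sum_congr rfl fun j hj => ?_
    have hj' : j + 1 < n := by simp at hj; omega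
    simp only [dd, dif_pos hj']
    split <;> simp
  · intro j hj hj'
    have : ¬ (j + 1 < n) := by
      simp only [Finset.mem_range] at hj hj'; omega
    simp [dd, this]

lemma sum_Ph (π : Equiv.Perm (Fin n)) (c : Fin n → ℕ) :
    ∑ i : Fin n, Ph π c i
      = maj π + ∑ i : Fin n, ((i : ℕ) + 1) * c i := by
  have h1 : ∑ i : Fin n, Ph π c i = ∑ i : Fin n, B π c (i : ℕ) :=
    Equiv.sum_comp π.symm (fun i : Fin n => B π c (i : ℕ))
  have h2 : ∑ i : Fin n, B π c (i : ℕ) = ∑ i ∈ Finset.range n, B π c i :=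
    Fin.sum_univ_eq_sum_range _ n
  have h3 : ∑ i ∈ Finset.range n, B π c i
      = ∑ j ∈ Finset.range n, (j + 1) * (cc c j + dd π j) :=
    sum_Ico_weighted _
  have h4 : ∑ i : Fin n, ((i : ℕ) + 1) * c i
      = ∑ j ∈ Finset.range n, (j + 1) * cc c j := by
    rw [← Fin.sum_univ_eq_sum_range (fun j => (j + 1) * cc c j) n]
    refine Finset.sum_congr rfl fun i _ => ?_
    simp [cc, i.2]
  rw [h1, h2, h3, h4, maj_eq]
  rw [← Finset.sum_add_distrib]
  refine Finset.sum_congr rfl fun j _ => ?_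
  ring

open ENNReal in
lemma tsum_pi_prod : ∀ (m : ℕ) (f : Fin m → ℕ → ℝ≥0∞),
    ∑' c : Fin m → ℕ, ∏ i, f i (c i) = ∏ i, ∑' k, f i k := by
  intro m
  induction m with
  | zero =>
    intro f
    simp [tsum_fintype]
  | succ m ih =>
    intro f
    rw [← Equiv.tsum_eq (Fin.consEquiv (fun _ => ℕ)) (fun c => ∏ i, f i (c i))]
    have key : ∀ (c : ℕ × (Fin m → ℕ)),
        ∏ i, f i ((Fin.consEquiv (fun _ => ℕ) c) i)
          = f 0 c.1 * ∏ i : Fin m, f i.succ (c.2 i) := by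
      intro c
      rw [Fin.prod_univ_succ]
      simp [Fin.consEquiv]
    simp only [key]
    rw [ENNReal.tsum_prod' (f := fun c : ℕ × (Fin m → ℕ) => f 0 c.1 * ∏ i : Fin m, f i.succ (c.2 i)), Fin.prod_univ_succ]
    calc ∑' (a : ℕ), ∑' (c : Fin m → ℕ), f 0 a * ∏ i : Fin m, f i.succ (c i)
        = ∑' (a : ℕ), f 0 a * ∑' (c : Fin m → ℕ), ∏ i : Fin m, f i.succ (c i) := by
          simp only [ENNReal.tsum_mul_left]
      _ = (∑' (a : ℕ), f 0 a) * ∑' (c : Fin m → ℕ), ∏ i : Fin m, f i.succ (c i) := by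
          rw [ENNReal.tsum_mul_right]
      _ = (∑' (a : ℕ), f 0 a) * ∏ i : Fin m, ∑' k, f i.succ k := by
          rw [ih (fun i => f i.succ)]

end MajAux

open MajAux ENNReal

/-- The Maj sampler: if `G₁, …, Gₙ` are i.i.d. geometric with parameter `1 - q`,
then for every permutation `π ∈ Sₙ`, `P(Γₙ(G) = π) = q^{maj π} / [n]_q!`. -/
theorem maj_sampler {Ω : Type*} [MeasurableSpace Ω] (μ : Measure Ω)
    [IsProbabilityMeasure μ] (q : ℝ) (hq0 : 0 < q) (hq1 : q < 1)
    (n : ℕ) (hn : 1 ≤ n) (G : Fin n → Ω → ℕ) (hmeas : ∀ i, Measurable (G i))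
    (hindep : iIndepFun G μ)
    (hgeom : ∀ i, ∀ k : ℕ, (μ {ω | G i ω = k}).toReal = q ^ k * (1 - q))
    (π : Equiv.Perm (Fin n)) :
    (μ {ω | GammaEq (fun i => G i ω) π}).toReal = q ^ maj π / qfact q n := by
  classical
  set p : ℝ≥0∞ := ENNReal.ofReal q with hp
  set r : ℝ≥0∞ := ENNReal.ofReal (1 - q) with hr
  have hq1' : 0 < 1 - q := by linarith
  -- single-point measures
  have hpt : ∀ (i : Fin n) (k : ℕ), μ (G i ⁻¹' {k}) = p ^ k * r := by
    intro i k
    have h1 : (μ (G i ⁻¹' {k})).toReal = q ^ k * (1 - q) := hgeom i k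
    rw [← ENNReal.ofReal_toReal (measure_ne_top μ (G i ⁻¹' {k})), h1,
      ENNReal.ofReal_mul (by positivity), ENNReal.ofReal_pow hq0.le]
  set F : Ω → (Fin n → ℕ) := fun ω i => G i ω with hF
  have hFmeas : Measurable F := measurable_pi_lambda _ hmeas
  set S : Set (Fin n → ℕ) := {g | GammaEq g π} with hS
  have hE : {ω | GammaEq (fun i => G i ω) π} = F ⁻¹' S := rfl
  have hsum : (∑' g : S, μ (F ⁻¹' {(g : Fin n → ℕ)})) = μ (F ⁻¹' S) :=
    tsum_measure_preimage_singleton (Set.to_countable S)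
      (fun g _ => hFmeas (measurableSet_singleton g))
  -- atom measures via independence
  have hatom : ∀ g : Fin n → ℕ, μ (F ⁻¹' {g}) = p ^ (∑ i : Fin n, g i) * r ^ n := by
    intro g
    have hpre : F ⁻¹' {g} = ⋂ i ∈ Finset.univ, G i ⁻¹' {g i} := by
      ext ω
      simp [hF, funext_iff]
    rw [hpre,
      hindep.measure_inter_preimage_eq_mul Finset.univ
        (sets := fun i => ({g i} : Set ℕ)) (fun i _ => measurableSet_singleton _)]
    calc ∏ i : Fin n, μ (G i ⁻¹' {g i}) = ∏ i : Fin n, (p ^ g i * r) := by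
          exact Finset.prod_congr rfl fun i _ => hpt i (g i)
      _ = (∏ i : Fin n, p ^ g i) * ∏ _i : Fin n, r := Finset.prod_mul_distrib
      _ = p ^ (∑ i : Fin n, g i) * r ^ n := by
          rw [Finset.prod_pow_eq_pow_sum, Finset.prod_const, Finset.card_univ,
            Fintype.card_fin]
  -- reindex sum by the bijection
  have hre : (∑' g : S, μ (F ⁻¹' {(g : Fin n → ℕ)}))
      = ∑' c : Fin n → ℕ, p ^ (∑ i : Fin n, Ph π c i) * r ^ n := by
    have h0 : (∑' g : S, μ (F ⁻¹' {(g : Fin n → ℕ)}))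
        = ∑' c : Fin n → ℕ, μ (F ⁻¹' {Ph π c}) :=
      (Equiv.tsum_eq (equivS π)
        (fun g : {g : Fin n → ℕ // GammaEq g π} => μ (F ⁻¹' {(g : Fin n → ℕ)}))).symm
    rw [h0]
    exact tsum_congr fun c => hatom (Ph π c)
  -- compute the tsum
  have hcomp : (∑' c : Fin n → ℕ, p ^ (∑ i : Fin n, Ph π c i) * r ^ n)
      = p ^ maj π * r ^ n * ∏ i : Fin n, (1 - p ^ ((i : ℕ) + 1))⁻¹ := by
    have h1 : ∀ c : Fin n → ℕ, p ^ (∑ i : Fin n, Ph π c i) * r ^ n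
        = (p ^ maj π * r ^ n) * ∏ i : Fin n, (p ^ ((i : ℕ) + 1)) ^ c i := by
      intro c
      rw [sum_Ph, pow_add]
      have : p ^ (∑ i : Fin n, ((i : ℕ) + 1) * c i)
          = ∏ i : Fin n, (p ^ ((i : ℕ) + 1)) ^ c i := by
        rw [← Finset.prod_pow_eq_pow_sum]
        exact Finset.prod_congr rfl fun i _ => (pow_mul p _ _)
      rw [this]; ring
    simp only [h1]
    rw [ENNReal.tsum_mul_left, tsum_pi_prod n (fun i k => (p ^ ((i : ℕ) + 1)) ^ k)]
    congr 1
    exact Finset.prod_congr rfl fun i _ => ENNReal.tsum_geometric _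
  -- combine
  have hμ : μ (F ⁻¹' S)
      = p ^ maj π * r ^ n * ∏ i : Fin n, (1 - p ^ ((i : ℕ) + 1))⁻¹ := by
    rw [← hsum, hre, hcomp]
  rw [hE, hμ]
  -- take toReal
  have hplt1 : p < 1 := by
    rw [hp]
    exact ENNReal.ofReal_lt_one.2 hq1
  have hpow_lt : ∀ i : Fin n, p ^ ((i : ℕ) + 1) < 1 := fun i =>
    pow_lt_one₀ zero_le hplt1 (by omega)
  have hfin : ∀ i : Fin n, (1 - p ^ ((i : ℕ) + 1))⁻¹ ≠ ⊤ := by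
    intro i
    rw [Ne, ENNReal.inv_eq_top, tsub_eq_zero_iff_le]
    exact not_le.2 (hpow_lt i)
  have htoR : ∀ i : Fin n, ((1 - p ^ ((i : ℕ) + 1))⁻¹).toReal
      = (1 - q ^ ((i : ℕ) + 1))⁻¹ := by
    intro i
    rw [ENNReal.toReal_inv, ENNReal.toReal_sub_of_le (hpow_lt i).le ENNReal.one_ne_top,
      ENNReal.toReal_pow, ENNReal.toReal_one, hp, ENNReal.toReal_ofReal hq0.le]
  rw [ENNReal.toReal_mul, ENNReal.toReal_mul, ENNReal.toReal_pow, ENNReal.toReal_pow,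
    ENNReal.toReal_prod, hp, hr, ENNReal.toReal_ofReal hq0.le,
    ENNReal.toReal_ofReal hq1'.le]
  rw [Finset.prod_congr rfl fun i _ => htoR i]
  -- now a real identity
  have hqint : ∀ i : ℕ, qint q (i + 1) = (1 - q ^ (i + 1)) / (1 - q) := by
    intro i
    rw [qint, geom_sum_eq hq1.ne]
    rw [div_eq_div_iff (by linarith [pow_lt_one₀ hq0.le hq1 (Nat.succ_ne_zero i)]) ?_]
    · ring
    · linarith
  have hq1n : ∀ m : ℕ, 0 < 1 - q ^ (m + 1) := fun m => by
    have h := pow_lt_one₀ hq0.le hq1 (Nat.succ_ne_zero m)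
    rw [Nat.succ_eq_add_one] at h
    linarith
  have hqf : qfact q n = (∏ i ∈ Finset.range n, (1 - q ^ (i + 1))) / (1 - q) ^ n := by
    rw [qfact, Finset.prod_congr rfl fun i _ => hqint i, Finset.prod_div_distrib,
      Finset.prod_const, Finset.card_range]
  have hqf_pos : 0 < qfact q n := by
    rw [hqf]
    exact div_pos (Finset.prod_pos fun i _ => hq1n i) (by positivity)
  have hprod : ∏ i : Fin n, (1 - q ^ ((i : ℕ) + 1))⁻¹
      = (∏ i ∈ Finset.range n, (1 - q ^ (i + 1)))⁻¹ := by
    rw [← Finset.prod_inv_distrib]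
    exact Fin.prod_univ_eq_prod_range (fun i => (1 - q ^ (i + 1))⁻¹) n
  rw [hprod, hqf]
  have h2 : (0:ℝ) < ∏ i ∈ Finset.range n, (1 - q ^ (i + 1)) :=
    Finset.prod_pos fun i _ => hq1n i
  field_simp
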